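/- arXiv:2507.06900 — 12 statements merged into one kernel-verified Lean document; each statement's English description precedes it below -/
import Mathlib

section
/- Let F be a field, let k₁, k₂, k₃ ∈ F, and let a, b, c ∈ F be nonzero. Define 𝓜(a,b,c) := (a² + b² + c² + k₁·b·c + k₂·a·c + k₃·a·b)/(a·b·c). Then the generalized Markov invariant is preserved by each of the three generalized mutations: (i) if b² + k₁·b·c + c² ≠ 0 then 𝓜((b² + k₁·b·c + c²)/a, b, c) = 𝓜(a,b,c); (ii) if a² + k₂·a·c + c² ≠ 0 then 𝓜(a, (a² + k₂·a·c + c²)/b, c) = 𝓜(a,b,c); (iii) if a² + k₃·a·b + b² ≠ 0 then 𝓜(a, b, (a² + k₃·a·b + b²)/c) = 𝓜(a,b,c). -/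
/-- The `(k₁,k₂,k₃)`-generalized Markov invariant
`𝓜(a,b,c) = (a² + b² + c² + k₁bc + k₂ac + k₃ab)/(abc)`. -/
def markovInv {F : Type*} [Field F] (k₁ k₂ k₃ : F) (a b c : F) : F :=
  (a ^ 2 + b ^ 2 + c ^ 2 + k₁ * b * c + k₂ * a * c + k₃ * a * b) / (a * b * c)


private lemma markovInv_swap12 {F : Type*} [Field F] (k₁ k₂ k₃ a b c : F) :
    markovInv k₁ k₂ k₃ a b c = markovInv k₂ k₁ k₃ b a c := by
  unfold markovInv; ring_nf

private lemma markovInv_swap13 {F : Type*} [Field F] (k₁ k₂ k₃ a b c : F) :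
    markovInv k₁ k₂ k₃ a b c = markovInv k₃ k₂ k₁ c b a := by
  unfold markovInv; ring_nf

private lemma markovInv_aux {F : Type*} [Field F] (k₁ k₂ k₃ a b c : F)
    (ha : a ≠ 0) (hb : b ≠ 0) (hc : c ≠ 0)
    (hd : b ^ 2 + k₁ * b * c + c ^ 2 ≠ 0) :
    markovInv k₁ k₂ k₃ ((b ^ 2 + k₁ * b * c + c ^ 2) / a) b c =
      markovInv k₁ k₂ k₃ a b c := by
  set d := b ^ 2 + k₁ * b * c + c ^ 2 with hdef
  have e : markovInv k₁ k₂ k₃ (d / a) b c =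
      (d * (a ^ 2 + b ^ 2 + c ^ 2 + k₁ * b * c + k₂ * a * c + k₃ * a * b)) /
        (d * (a * b * c)) := by
    unfold markovInv
    rw [div_eq_div_iff (by simp [div_ne_zero hd ha, hb, hc])
      (by simp [hd, ha, hb, hc])]
    field_simp
    ring
  rw [e, mul_div_mul_left _ _ hd]
  rfl

/-- The generalized Markov invariant is preserved by each of the three generalized
mutations. -/
theorem markovInv_mutation_invariant {F : Type*} [Field F] (k₁ k₂ k₃ a b c : F)
    (ha : a ≠ 0) (hb : b ≠ 0) (hc : c ≠ 0) :
    (b ^ 2 + k₁ * b * c + c ^ 2 ≠ 0 →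
      markovInv k₁ k₂ k₃ ((b ^ 2 + k₁ * b * c + c ^ 2) / a) b c =
        markovInv k₁ k₂ k₃ a b c) ∧
    (a ^ 2 + k₂ * a * c + c ^ 2 ≠ 0 →
      markovInv k₁ k₂ k₃ a ((a ^ 2 + k₂ * a * c + c ^ 2) / b) c =
        markovInv k₁ k₂ k₃ a b c) ∧
    (a ^ 2 + k₃ * a * b + b ^ 2 ≠ 0 →
      markovInv k₁ k₂ k₃ a b ((a ^ 2 + k₃ * a * b + b ^ 2) / c) =
        markovInv k₁ k₂ k₃ a b c) := by
  refine ⟨fun h1 => markovInv_aux k₁ k₂ k₃ a b c ha hb hc h1, fun h2 => ?_, fun h3 => ?_⟩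
  · have h2' : a ^ 2 + k₂ * a * c + c ^ 2 ≠ 0 := h2
    calc markovInv k₁ k₂ k₃ a ((a ^ 2 + k₂ * a * c + c ^ 2) / b) c
        = markovInv k₂ k₁ k₃ ((a ^ 2 + k₂ * a * c + c ^ 2) / b) a c :=
          markovInv_swap12 ..
      _ = markovInv k₂ k₁ k₃ b a c :=
          markovInv_aux k₂ k₁ k₃ b a c hb ha hc h2'
      _ = markovInv k₁ k₂ k₃ a b c := (markovInv_swap12 ..).symm
  · have h3' : b ^ 2 + k₃ * b * a + a ^ 2 ≠ 0 := by
      intro h; apply h3; linear_combination h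
    calc markovInv k₁ k₂ k₃ a b ((a ^ 2 + k₃ * a * b + b ^ 2) / c)
        = markovInv k₃ k₂ k₁ ((b ^ 2 + k₃ * b * a + a ^ 2) / c) b a := by
          rw [markovInv_swap13]; ring_nf
      _ = markovInv k₃ k₂ k₁ c b a :=
          markovInv_aux k₃ k₂ k₁ c b a hc hb ha h3'
      _ = markovInv k₁ k₂ k₃ a b c := (markovInv_swap13 ..).symm
end

section
/- Let F be a field, let k₁, k₂, k₃ ∈ F, let a, b, c ∈ F be nonzero, and let 𝓜 ∈ F satisfy a² + b² + c² + k₁·b·c + k₂·a·c + k₃·a·b = 𝓜·a·b·c. Then x := 𝓜·a − k₁, y := 𝓜·b − k₂, z := 𝓜·c − k₃ satisfy the second (k₁,k₂,k₃)-generalized Markov equation: x² + y² + z² + (2k₁ + k₂k₃)·x + (2k₂ + k₁k₃)·y + (2k₃ + k₁k₂)·z + k₁² + k₂² + k₃² + 2k₁k₂k₃ = x·y·z. -/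
/-- If `(a,b,c)` (all nonzero) satisfies the generalized Markov equation
`a² + b² + c² + k₁bc + k₂ac + k₃ab = 𝓜abc`, then
`(𝓜a − k₁, 𝓜b − k₂, 𝓜c − k₃)` satisfies the second `(k₁,k₂,k₃)`-generalized
Markov equation. -/
theorem second_markov_solution {F : Type*} [Field F] (k₁ k₂ k₃ a b c M : F)
    (ha : a ≠ 0) (hb : b ≠ 0) (hc : c ≠ 0)
    (h : a ^ 2 + b ^ 2 + c ^ 2 + k₁ * b * c + k₂ * a * c + k₃ * a * b = M * a * b * c) :
    (M * a - k₁) ^ 2 + (M * b - k₂) ^ 2 + (M * c - k₃) ^ 2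
      + (2 * k₁ + k₂ * k₃) * (M * a - k₁)
      + (2 * k₂ + k₁ * k₃) * (M * b - k₂)
      + (2 * k₃ + k₁ * k₂) * (M * c - k₃)
      + k₁ ^ 2 + k₂ ^ 2 + k₃ ^ 2 + 2 * k₁ * k₂ * k₃
      = (M * a - k₁) * (M * b - k₂) * (M * c - k₃) := by
  linear_combination M ^ 2 * h
end

section
/- Let R be a commutative ring, let 𝓜, k ∈ R, and let P be a 2×2 matrix over R with det(P) = 1 and tr(P) = 𝓜·P₁₂ − k, where P₁₂ is the (1,2)-entry of P. Let E be the 2×2 matrix with rows (0,0) and (𝓜,0). Then P·E·P = (tr(P) + k)·P + E, and P⁻¹·E·P⁻¹ = −(tr(P⁻¹) + k)·P⁻¹ + E. -/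
open Matrix

/-- Lemma on multiplying a matrix with `tr(P) = 𝓜·P₁₂ − k` around the elementary
matrix `E = [[0,0],[𝓜,0]]`. -/
theorem mul_E_mul {R : Type*} [CommRing R] (M k : R) (P : Matrix (Fin 2) (Fin 2) R)
    (hdet : P.det = 1) (htr : P.trace = M * P 0 1 - k) :
    P * !![(0 : R), 0; M, 0] * P = (P.trace + k) • P + !![(0 : R), 0; M, 0] ∧
    P⁻¹ * !![(0 : R), 0; M, 0] * P⁻¹ =
      (-(P⁻¹.trace + k)) • P⁻¹ + !![(0 : R), 0; M, 0] := by
  have hinv : P⁻¹ = !![P 1 1, -(P 0 1); -(P 1 0), P 0 0] := by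
    rw [Matrix.inv_def, hdet, Matrix.adjugate_fin_two]
    simp
  have hk : P.trace + k = M * P 0 1 := by rw [htr]; ring
  have hk' : P⁻¹.trace + k = M * P 0 1 := by
    rw [hinv, Matrix.trace_fin_two_of]
    rw [Matrix.trace_fin_two] at htr
    simp only [Matrix.trace_fin_two] at hk
    linear_combination hk
  rw [hinv] at hk'
  rw [hk, hinv, hk']
  rw [Matrix.det_fin_two] at hdet
  constructor <;>
  · ext i j
    fin_cases i <;> fin_cases j <;>
      simp [Matrix.mul_apply, Fin.sum_univ_two] <;>
      (first | ring1 | linear_combination M * hdet)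
end

section
/- Let R be a commutative ring and let 𝓜, α, β, γ ∈ R. Let P, Q, N be 2×2 matrices over R with det(P) = det(N) = 1, tr(P) = 𝓜·P₁₂ − α, tr(N) = 𝓜·N₁₂ − γ, and Q = P·N − S(β). Then tr(P·Q − S(γ)) = tr(P)·tr(Q) − tr(N) − α·β − 2·γ, and tr(Q·N − S(α)) = tr(Q)·tr(N) − tr(P) − β·γ − 2·α. -/
open Matrix

/-- The matrix `S(k) = [[k, 0], [k·𝓜, k]]`. -/
def Smat {R : Type*} [CommRing R] (M k : R) : Matrix (Fin 2) (Fin 2) R :=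
  !![k, 0; k * M, k]

/-- Trace formula for the products in a cluster generalized Cohn triple `(P,Q,N)`
with parities `(α,β,γ)`. -/
theorem trace_of_cohn_product {R : Type*} [CommRing R] (M α β γ : R)
    (P Q N : Matrix (Fin 2) (Fin 2) R)
    (hPdet : P.det = 1) (hNdet : N.det = 1)
    (htrP : P.trace = M * P 0 1 - α) (htrN : N.trace = M * N 0 1 - γ)
    (hQ : Q = P * N - Smat M β) :
    (P * Q - Smat M γ).trace = P.trace * Q.trace - N.trace - α * β - 2 * γ ∧
    (Q * N - Smat M α).trace = Q.trace * N.trace - P.trace - β * γ - 2 * α := by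
  subst hQ
  simp only [Matrix.trace_fin_two, Matrix.det_fin_two, Smat, Matrix.mul_apply,
    Fin.sum_univ_two, Matrix.sub_apply, Matrix.cons_val', Matrix.cons_val_zero,
    Matrix.cons_val_one, Matrix.head_cons, Matrix.empty_val',
    Matrix.cons_val_fin_one, Matrix.head_fin_const, Matrix.of_apply, Matrix.cons_val_one, Matrix.head_cons] at *
  exact ⟨by linear_combination (-(N 0 0) - N 1 1) * hPdet + β * htrP,
    by linear_combination (-(P 0 0) - P 1 1) * hNdet + β * htrN⟩
end

section
/- Let R be a commutative ring and let 𝓜, α, β, γ ∈ R. Let P, Q, N be 2×2 matrices over R with det(P) = det(Q) = det(N) = 1, tr(P) = 𝓜·P₁₂ − α, tr(Q) = 𝓜·Q₁₂ − β, tr(N) = 𝓜·N₁₂ − γ, and Q = P·N − S(β). Then: (a) tr(P·Q − S(γ)) = 𝓜·(P·Q − S(γ))₁₂ − γ; (b) det(P·Q − S(γ)) = 1; (c) tr(Q·N − S(α)) = 𝓜·(Q·N − S(α))₁₂ − α; (d) det(Q·N − S(α)) = 1. -/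
open Matrix

/-- If `(P,Q,N)` is a cluster generalized Cohn triple with parities `(α,β,γ)`, then
`P·Q − S(γ)` and `Q·N − S(α)` again satisfy the trace and determinant conditions of
cluster generalized Cohn matrices. -/
theorem cohn_propagation_trace_det {R : Type*} [CommRing R] (M α β γ : R)
    (P Q N : Matrix (Fin 2) (Fin 2) R)
    (hPdet : P.det = 1) (hQdet : Q.det = 1) (hNdet : N.det = 1)
    (htrP : P.trace = M * P 0 1 - α) (htrQ : Q.trace = M * Q 0 1 - β)
    (htrN : N.trace = M * N 0 1 - γ)
    (hQ : Q = P * N - Smat M β) :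
    (P * Q - Smat M γ).trace = M * (P * Q - Smat M γ) 0 1 - γ ∧
    (P * Q - Smat M γ).det = 1 ∧
    (Q * N - Smat M α).trace = M * (Q * N - Smat M α) 0 1 - α ∧
    (Q * N - Smat M α).det = 1 := by
  subst hQ
  simp only [Smat, Matrix.trace_fin_two, Matrix.det_fin_two, Matrix.sub_apply,
    Matrix.mul_apply, Fin.sum_univ_two, Matrix.cons_val', Matrix.cons_val_zero,
    Matrix.cons_val_one, Matrix.head_cons, Matrix.head_fin_const, Matrix.empty_val',
    Matrix.cons_val_fin_one, Matrix.of_apply] at htrP htrQ htrN hPdet hNdet hQdet ⊢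
  refine ⟨?_, ?_, ?_, ?_⟩
  · linear_combination (P 1 1 + P 0 0) * htrQ - htrN +
      (N 0 1 * M - N 1 1 - N 0 0) * hPdet
  · linear_combination
      (-(γ * P 1 1) - γ * P 0 0 + β * P 0 1 * P 1 0 - β * P 0 0 * P 1 1) * htrQ +
      (N 0 1 * M + P 0 1 * P 1 0 * N 0 1 * M - N 1 1 - N 1 1 * P 0 1 * P 1 0 - N 0 0
        - N 0 0 * P 0 1 * P 1 0 - P 0 0 * P 1 1 * N 0 1 * M + P 0 0 * P 1 1 * N 1 1
        + P 0 0 * P 1 1 * N 0 0 + γ) * htrN +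
      (-(N 0 1 * N 1 0) - N 0 1 ^ 2 * M ^ 2 + P 0 1 * P 1 0 * N 0 1 * N 1 0
        + 2 * N 1 1 * N 0 1 * M - N 1 1 ^ 2 + 2 * N 0 0 * N 0 1 * M - N 0 0 * N 1 1
        - N 0 0 * N 1 1 * P 0 1 * P 1 0 - N 0 0 ^ 2 - P 0 0 * P 1 1 * N 0 1 * N 1 0
        + P 0 0 * P 1 1 * N 0 0 * N 1 1) * hPdet +
      hNdet
  · linear_combination -htrP + (N 1 1 + N 0 0) * htrQ +
      (P 0 1 * M - P 1 1 - P 0 0) * hNdet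
  · linear_combination
      (P 0 1 * M + P 0 1 * N 0 1 * N 1 0 * M - N 1 1 * P 1 0 * N 0 1
        - N 1 1 * P 0 1 * N 1 0 + N 1 1 ^ 2 * P 0 1 * M - N 0 0 * P 1 0 * N 0 1
        - N 0 0 * P 0 1 * N 1 0 - P 1 1 - P 1 1 * N 0 1 * N 1 0 - P 1 1 * N 1 1 ^ 2
        - P 0 0 - P 0 0 * N 0 1 * N 1 0 + P 0 0 * N 1 1 * N 0 1 * M
        + P 0 0 * N 0 0 * N 0 1 * M - P 0 0 * N 0 0 ^ 2 + β * N 1 1 + β * N 0 0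
        + α) * htrP +
      (-(N 1 1 * P 0 1 * M) - N 0 0 * P 0 1 * M + P 1 1 * N 1 1 + P 1 1 * N 0 0
        + P 0 0 * N 1 1 + P 0 0 * N 0 0 + β * N 0 1 * N 1 0
        - β * N 0 0 * N 1 1) * htrQ +
      (2 + 2 * N 0 1 * N 1 0 + N 0 1 ^ 2 * N 1 0 ^ 2 - 2 * N 0 0 * N 1 1
        - 2 * N 0 0 * N 1 1 * N 0 1 * N 1 0 + N 0 0 ^ 2 * N 1 1 ^ 2) * hPdet +
      (-1 - N 0 1 * N 1 0 - 2 * P 0 1 * P 1 0 - P 0 1 ^ 2 * M ^ 2 + N 0 0 * N 1 1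
        + 2 * P 1 1 * P 0 1 * M - P 1 1 ^ 2 + 2 * P 0 0 * P 0 1 * M
        - P 0 0 ^ 2) * hNdet
end

section
/- Let R be a commutative ring and let 𝓜, g, k ∈ R. (1) If X is a 2×2 matrix over R with det(X) = 1 and tr(X) = −k, then det(ψ_g(X)) = 1, the (1,2)-entry of ψ_g(X) equals X₁₂, and tr(ψ_g(X)) = 𝓜·X₁₂ − k. (2) If P is a 2×2 matrix over R with det(P) = 1 and tr(P) = 𝓜·P₁₂ − k, then det(ψ_g⁻¹(P)) = 1, the (1,2)-entry of ψ_g⁻¹(P) equals P₁₂, and tr(ψ_g⁻¹(P)) = −k. Moreover, ψ_g⁻¹(ψ_g(X)) = X and ψ_g(ψ_g⁻¹(P)) = P for all 2×2 matrices X, P over R; in particular ψ_g is a bijection between the set of matrices with det 1 and trace −k whose (1,2)-entry is a and the set of matrices with det 1 and trace 𝓜·a − k whose (1,2)-entry is a. -/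
open Matrix

/-- The lower-triangular matrix `L(u) = [[1,0],[u,1]]`. -/
def Lmat {R : Type*} [CommRing R] (u : R) : Matrix (Fin 2) (Fin 2) R :=
  !![1, 0; u, 1]

/-- The matrix obtained from `A` by swapping its two diagonal entries. -/
def swapDiag {R : Type*} [CommRing R] (A : Matrix (Fin 2) (Fin 2) R) :
    Matrix (Fin 2) (Fin 2) R :=
  !![A 1 1, A 0 1; A 1 0, A 0 0]

/-- The map `ψ_g(A) = L(𝓜−g)·A'·L(g)`. -/
def psi {R : Type*} [CommRing R] (M g : R) (A : Matrix (Fin 2) (Fin 2) R) :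
    Matrix (Fin 2) (Fin 2) R :=
  Lmat (M - g) * swapDiag A * Lmat g

/-- The map `ψ_g⁻¹(A) = L(−g)·A'·L(−(𝓜−g))`. -/
def psiInv {R : Type*} [CommRing R] (M g : R) (A : Matrix (Fin 2) (Fin 2) R) :
    Matrix (Fin 2) (Fin 2) R :=
  Lmat (-g) * swapDiag A * Lmat (-(M - g))

/-- `ψ_g` carries cluster Markov-monodromy matrices to cluster generalized Cohn
matrices and `ψ_g⁻¹` is its inverse; in particular `ψ_g` is a bijection between
the two sets of matrices with fixed `(1,2)`-entry. -/
theorem psi_bijection {R : Type*} [CommRing R] (M g k : R) :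
    (∀ X : Matrix (Fin 2) (Fin 2) R, X.det = 1 → X.trace = -k →
      (psi M g X).det = 1 ∧ (psi M g X) 0 1 = X 0 1 ∧
        (psi M g X).trace = M * X 0 1 - k) ∧
    (∀ P : Matrix (Fin 2) (Fin 2) R, P.det = 1 → P.trace = M * P 0 1 - k →
      (psiInv M g P).det = 1 ∧ (psiInv M g P) 0 1 = P 0 1 ∧
        (psiInv M g P).trace = -k) ∧
    (∀ A : Matrix (Fin 2) (Fin 2) R, psiInv M g (psi M g A) = A) ∧
    (∀ A : Matrix (Fin 2) (Fin 2) R, psi M g (psiInv M g A) = A) ∧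
    (∀ a : R, Set.BijOn (psi M g)
      {A : Matrix (Fin 2) (Fin 2) R | A.det = 1 ∧ A.trace = -k ∧ A 0 1 = a}
      {A : Matrix (Fin 2) (Fin 2) R | A.det = 1 ∧ A.trace = M * a - k ∧ A 0 1 = a}) := by

  have hmul : ∀ A : Matrix (Fin 2) (Fin 2) R, ∀ u v : R,
      Lmat u * swapDiag A * Lmat v =
      !![A 1 1 + v * A 0 1, A 0 1;
         u * A 1 1 + A 1 0 + v * (u * A 0 1 + A 0 0), u * A 0 1 + A 0 0] := by
    intro A u v
    ext i j
    fin_cases i <;> fin_cases j <;>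
      simp [Lmat, swapDiag, Matrix.mul_fin_two] <;> ring
  have h1 : ∀ X : Matrix (Fin 2) (Fin 2) R, X.det = 1 → X.trace = -k →
      (psi M g X).det = 1 ∧ (psi M g X) 0 1 = X 0 1 ∧
        (psi M g X).trace = M * X 0 1 - k := by
    intro X hd ht
    rw [Matrix.det_fin_two] at hd
    rw [Matrix.trace_fin_two] at ht
    unfold psi
    rw [hmul]
    refine ⟨?_, ?_, ?_⟩
    · rw [Matrix.det_fin_two_of]; linear_combination hd
    · simp
    · rw [Matrix.trace_fin_two_of]; linear_combination ht
  have h2 : ∀ P : Matrix (Fin 2) (Fin 2) R, P.det = 1 → P.trace = M * P 0 1 - k →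
      (psiInv M g P).det = 1 ∧ (psiInv M g P) 0 1 = P 0 1 ∧
        (psiInv M g P).trace = -k := by
    intro P hd ht
    rw [Matrix.det_fin_two] at hd
    rw [Matrix.trace_fin_two] at ht
    unfold psiInv
    rw [hmul]
    refine ⟨?_, ?_, ?_⟩
    · rw [Matrix.det_fin_two_of]; linear_combination hd
    · simp
    · rw [Matrix.trace_fin_two_of]; linear_combination ht
  have h3 : ∀ A : Matrix (Fin 2) (Fin 2) R, psiInv M g (psi M g A) = A := by
    intro A
    unfold psi psiInv
    rw [hmul, hmul]
    ext i j
    fin_cases i <;> fin_cases j <;> simp <;> ring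
  have h4 : ∀ A : Matrix (Fin 2) (Fin 2) R, psi M g (psiInv M g A) = A := by
    intro A
    unfold psi psiInv
    rw [hmul, hmul]
    ext i j
    fin_cases i <;> fin_cases j <;> simp <;> ring
  refine ⟨h1, h2, h3, h4, fun a => ⟨?_, ?_, ?_⟩⟩
  · rintro A ⟨hd, ht, ha⟩
    obtain ⟨d1, e1, t1⟩ := h1 A hd ht
    exact ⟨d1, by rw [t1, ha], by rw [e1, ha]⟩
  · intro A _ B _ h
    rw [← h3 A, ← h3 B, h]
  · rintro P ⟨hd, ht, ha⟩
    obtain ⟨d2, e2, t2⟩ := h2 P hd (by rw [ht, ha])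
    exact ⟨psiInv M g P, ⟨d2, t2, by rw [e2, ha]⟩, h4 P⟩
end

section
/- Let R be a commutative ring and let 𝓜, g, β ∈ R. Let X, Y, Z be 2×2 matrices over R with det(X) = det(Y) = det(Z) = 1, X·Y·Z = T, and tr(Y) = −β. Then ψ_g(Y) = ψ_g(X)·ψ_g(Z) − S(β). -/
open Matrix

/-- The matrix `T = [[−1, 0], [𝓜, −1]]`. -/
def Tmat {R : Type*} [CommRing R] (M : R) : Matrix (Fin 2) (Fin 2) R :=
  !![-1, 0; M, -1]


private theorem psi_key {R : Type*} [CommRing R] (M β : R)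
    (X Y Z : Matrix (Fin 2) (Fin 2) R)
    (hX : X.det = 1) (hZ : Z.det = 1)
    (hT : X * Y * Z = Tmat M) (htrY : Y.trace = -β) :
    Y = Z * Lmat M * X - β • 1 := by
  have hL : Lmat M = -(Tmat M).adjugate := by
    simp [Lmat, Tmat, Matrix.adjugate_fin_two]
  have h1 : Z * Lmat M * X = -(Z * Z.adjugate * Y.adjugate * (X.adjugate * X)) := by
    rw [hL, ← hT, Matrix.adjugate_mul_distrib, Matrix.adjugate_mul_distrib]
    noncomm_ring
  rw [Matrix.mul_adjugate, Matrix.adjugate_mul, hX, hZ] at h1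
  simp only [one_smul, one_mul, mul_one] at h1
  rw [h1, Matrix.adjugate_fin_two]
  have h0 : Y 0 0 + Y 1 1 = -β := by simpa [Matrix.trace_fin_two] using htrY
  ext i j
  fin_cases i <;> fin_cases j <;>
    simp [Matrix.one_apply] <;> linear_combination h0

/-- `ψ_g` carries a cluster Markov-monodromy triple (`X·Y·Z = T`) to a cluster
generalized Cohn triple (`ψ_g(Y) = ψ_g(X)·ψ_g(Z) − S(β)`). -/
theorem psi_triple {R : Type*} [CommRing R] (M g β : R)
    (X Y Z : Matrix (Fin 2) (Fin 2) R)
    (hX : X.det = 1) (hY : Y.det = 1) (hZ : Z.det = 1)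
    (hT : X * Y * Z = Tmat M) (htrY : Y.trace = -β) :
    psi M g Y = psi M g X * psi M g Z - Smat M β := by
  rw [psi_key M β X Y Z hX hZ hT htrY]
  ext i j
  fin_cases i <;> fin_cases j <;>
    simp [psi, Lmat, swapDiag, Smat, Matrix.mul_apply, Fin.sum_univ_succ, Matrix.one_apply,
      Matrix.smul_apply, Matrix.sub_apply] <;> ring
end

section
/- Let R be a commutative ring and let 𝓜, g, β ∈ R. Let P, Q, N be 2×2 matrices over R with det(P) = det(Q) = det(N) = 1, tr(Q) = 𝓜·Q₁₂ − β, and Q = P·N − S(β). Then ψ_g⁻¹(P)·ψ_g⁻¹(Q)·ψ_g⁻¹(N) = T. -/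
open Matrix

private def Dmat {R : Type*} [CommRing R] : Matrix (Fin 2) (Fin 2) R := !![1, 0; 0, -1]

private lemma swapDiag_eq {R : Type*} [CommRing R] (A : Matrix (Fin 2) (Fin 2) R) :
    swapDiag A = Dmat * A.adjugate * Dmat := by
  ext i j
  fin_cases i <;> fin_cases j <;>
    simp [swapDiag, Dmat, Matrix.adjugate_fin_two, Matrix.mul_apply, Fin.sum_univ_two]

private lemma hstep {R : Type*} [CommRing R] (M g : R) (X : Matrix (Fin 2) (Fin 2) R) :
    Dmat * (Lmat (-(M - g)) * (Lmat (-g) * (Dmat * X))) = Lmat M * X := by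
  have h : (Dmat * (Lmat (-(M - g)) * (Lmat (-g) * Dmat)) : Matrix (Fin 2) (Fin 2) R)
      = Lmat M := by
    ext i j
    fin_cases i <;> fin_cases j <;>
      simp [Dmat, Lmat, Matrix.mul_apply, Fin.sum_univ_two] <;> ring
  calc Dmat * (Lmat (-(M - g)) * (Lmat (-g) * (Dmat * X)))
      = (Dmat * (Lmat (-(M - g)) * (Lmat (-g) * Dmat))) * X := by
        simp only [mul_assoc]
    _ = Lmat M * X := by rw [h]

private lemma key_lemma {R : Type*} [CommRing R] (M β : R)
    (P Q N : Matrix (Fin 2) (Fin 2) R)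
    (htrQ : Q.trace = M * Q 0 1 - β)
    (hprod : Q = P * N - Smat M β) :
    Lmat M * Q.adjugate * Lmat M = -(P * N) := by
  subst hprod
  simp [Matrix.trace_fin_two, Matrix.mul_apply, Fin.sum_univ_two, Smat] at htrQ
  ext i j
  fin_cases i <;> fin_cases j <;>
    simp [Lmat, Matrix.adjugate_fin_two, Matrix.mul_apply, Matrix.sub_apply, Smat,
      Fin.sum_univ_two, Matrix.neg_apply] <;>
    first
      | linear_combination htrQ
      | linear_combination -htrQ
      | linear_combination M * htrQ
      | linear_combination -(M * htrQ)
      | ring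

/-- `ψ_g⁻¹` carries a cluster generalized Cohn triple (`Q = P·N − S(β)`) to a
cluster Markov-monodromy triple (`ψ_g⁻¹(P)·ψ_g⁻¹(Q)·ψ_g⁻¹(N) = T`). -/
theorem psiInv_triple {R : Type*} [CommRing R] (M g β : R)
    (P Q N : Matrix (Fin 2) (Fin 2) R)
    (hP : P.det = 1) (hQ : Q.det = 1) (hN : N.det = 1)
    (htrQ : Q.trace = M * Q 0 1 - β)
    (hprod : Q = P * N - Smat M β) :
    psiInv M g P * psiInv M g Q * psiInv M g N = Tmat M := by
  have key := key_lemma M β P Q N htrQ hprod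
  have main : psiInv M g P * psiInv M g Q * psiInv M g N
      = Lmat (-g) * Dmat * (P.adjugate * (Lmat M * Q.adjugate * Lmat M) * N.adjugate)
          * Dmat * Lmat (-(M - g)) := by
    simp only [psiInv, swapDiag_eq, mul_assoc, hstep]
  have inner : P.adjugate * (Lmat M * Q.adjugate * Lmat M) * N.adjugate = -1 := by
    rw [key]
    calc P.adjugate * -(P * N) * N.adjugate
        = -(P.adjugate * P * (N * N.adjugate)) := by noncomm_ring
      _ = -1 := by
          rw [Matrix.adjugate_mul, Matrix.mul_adjugate, hP, hN]
          simp
  rw [main, inner]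
  ext i j
  fin_cases i <;> fin_cases j <;>
    simp [Dmat, Lmat, Tmat, Matrix.mul_apply, Fin.sum_univ_two] <;> ring
end

section
/- Let R be a commutative ring and let 𝓜, g, α, β, γ ∈ R. Let X, Y, Z be 2×2 matrices over R with det(X) = det(Y) = det(Z) = 1, X·Y·Z = T, tr(X) = −α, tr(Y) = −β, tr(Z) = −γ. Then ψ_g(Y·Z·Y⁻¹) = ψ_g(X)·ψ_g(Y) − S(γ) and ψ_g(Y⁻¹·X·Y) = ψ_g(Y)·ψ_g(Z) − S(α). -/
open Matrix

section Aux
variable {R : Type*} [CommRing R]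

lemma psi_mul (M g : R) (A B : Matrix (Fin 2) (Fin 2) R) :
    psi M g A * psi M g B = psi M g (B * Lmat M * A) := by
  ext i j
  fin_cases i <;> fin_cases j <;>
    simp [psi, Lmat, swapDiag, Matrix.mul_apply, Fin.sum_univ_two] <;> ring

lemma psi_sub_smul (M g s : R) (A : Matrix (Fin 2) (Fin 2) R) :
    psi M g (A - s • 1) = psi M g A - Smat M s := by
  ext i j
  fin_cases i <;> fin_cases j <;>
    simp [psi, Lmat, swapDiag, Smat, Matrix.mul_apply, Fin.sum_univ_two,
      Matrix.sub_apply, Matrix.smul_apply, Matrix.one_apply, smul_eq_mul] <;> ring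

lemma CH2 (A : Matrix (Fin 2) (Fin 2) R) (s : R) (hd : A.det = 1) (ht : A.trace = -s) :
    A * A = (-s) • A - 1 := by
  rw [Matrix.det_fin_two] at hd
  rw [Matrix.trace_fin_two] at ht
  ext i j
  fin_cases i <;> fin_cases j <;>
    simp [Matrix.mul_apply, Fin.sum_univ_two, Matrix.one_apply, Matrix.sub_apply,
      Matrix.smul_apply, smul_eq_mul]
  · linear_combination A 0 0 * ht - hd
  · linear_combination A 0 1 * ht
  · linear_combination A 1 0 * ht
  · linear_combination A 1 1 * ht - hd

lemma neg_inv_eq (N : Matrix (Fin 2) (Fin 2) R) (s : R)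
    (hNd : N.det = 1) (hNt : N.trace = -s) : -N⁻¹ = N + s • (1 : Matrix (Fin 2) (Fin 2) R) := by
  have hNu : IsUnit N.det := by rw [hNd]; exact isUnit_one
  have h2 : N * N * N⁻¹ = ((-s) • N - 1) * N⁻¹ := by rw [CH2 N s hNd hNt]
  rw [Matrix.mul_assoc, Matrix.mul_nonsing_inv N hNu, mul_one, Matrix.sub_mul,
    Matrix.smul_mul, Matrix.mul_nonsing_inv N hNu, Matrix.one_mul] at h2
  have h3 : N + N⁻¹ = (-s) • 1 := eq_sub_iff_add_eq.mp h2
  calc -N⁻¹ = N - (N + N⁻¹) := by abel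
    _ = N - (-s) • 1 := by rw [h3]
    _ = N + s • 1 := by rw [neg_smul, sub_neg_eq_add]

lemma key1 (M s : R) (W N : Matrix (Fin 2) (Fin 2) R)
    (hNd : N.det = 1) (hNt : N.trace = -s) (h : W * N = Tmat M) :
    W * Lmat M * W - s • W = Tmat M := by
  have hNu : IsUnit N.det := by rw [hNd]; exact isUnit_one
  have hLT : Lmat M * Tmat M = -1 := by
    ext i j
    fin_cases i <;> fin_cases j <;>
      simp [Lmat, Tmat, Matrix.mul_apply, Fin.sum_univ_two, Matrix.one_apply]
  have hLW : Lmat M * W = -N⁻¹ := by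
    calc Lmat M * W = Lmat M * (W * N) * N⁻¹ := by
          rw [show Lmat M * (W * N) * N⁻¹ = Lmat M * W * (N * N⁻¹) from by noncomm_ring,
            Matrix.mul_nonsing_inv N hNu, mul_one]
      _ = -N⁻¹ := by rw [h, hLT, neg_one_mul]
  calc W * Lmat M * W - s • W = W * (Lmat M * W) - s • W := by rw [Matrix.mul_assoc]
    _ = W * (N + s • 1) - s • W := by rw [hLW, neg_inv_eq N s hNd hNt]
    _ = W * N := by rw [mul_add, Matrix.mul_smul, mul_one, add_sub_cancel_right]
    _ = Tmat M := h

lemma key2 (M s : R) (W N : Matrix (Fin 2) (Fin 2) R)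
    (hNd : N.det = 1) (hNt : N.trace = -s) (h : N * W = Tmat M) :
    W * Lmat M * W - s • W = Tmat M := by
  have hNu : IsUnit N.det := by rw [hNd]; exact isUnit_one
  have hTL : Tmat M * Lmat M = -1 := by
    ext i j
    fin_cases i <;> fin_cases j <;>
      simp [Lmat, Tmat, Matrix.mul_apply, Fin.sum_univ_two, Matrix.one_apply]
  have hWL : W * Lmat M = -N⁻¹ := by
    calc W * Lmat M = N⁻¹ * (N * W * Lmat M) := by
          rw [show N⁻¹ * (N * W * Lmat M) = (N⁻¹ * N) * (W * Lmat M) from by noncomm_ring,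
            Matrix.nonsing_inv_mul N hNu, one_mul]
      _ = -N⁻¹ := by rw [h, hTL, mul_neg, mul_one]
  calc W * Lmat M * W - s • W = (N + s • 1) * W - s • W := by
        rw [hWL, neg_inv_eq N s hNd hNt]
    _ = N * W := by rw [add_mul, Matrix.smul_mul, one_mul, add_sub_cancel_right]
    _ = Tmat M := h

lemma cancel {A B X Y : Matrix (Fin 2) (Fin 2) R}
    (hXu : IsUnit X.det) (hYu : IsUnit Y.det) (h : X * A * Y = X * B * Y) : A = B := by
  have e : ∀ C : Matrix (Fin 2) (Fin 2) R, X⁻¹ * (X * C * Y) * Y⁻¹ = C := fun C => by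
    rw [show X⁻¹ * (X * C * Y) * Y⁻¹ = (X⁻¹ * X) * C * (Y * Y⁻¹) from by noncomm_ring,
      Matrix.nonsing_inv_mul X hXu, Matrix.mul_nonsing_inv Y hYu, one_mul, mul_one]
  rw [← e A, ← e B, h]

end Aux

/-- `ψ_g` is compatible with the generation rules of the cluster Markov-monodromy
tree and the cluster generalized Cohn tree. -/
theorem psi_generation_rule {R : Type*} [CommRing R] (M g α β γ : R)
    (X Y Z : Matrix (Fin 2) (Fin 2) R)
    (hX : X.det = 1) (hY : Y.det = 1) (hZ : Z.det = 1)
    (hT : X * Y * Z = Tmat M)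
    (htrX : X.trace = -α) (htrY : Y.trace = -β) (htrZ : Z.trace = -γ) :
    psi M g (Y * Z * Y⁻¹) = psi M g X * psi M g Y - Smat M γ ∧
    psi M g (Y⁻¹ * X * Y) = psi M g Y * psi M g Z - Smat M α := by
  have hXu : IsUnit X.det := by rw [hX]; exact isUnit_one
  have hYu : IsUnit Y.det := by rw [hY]; exact isUnit_one
  have hZu : IsUnit Z.det := by rw [hZ]; exact isUnit_one
  constructor
  · have key := key1 M γ (X * Y) Z hZ htrZ hT
    have inner : Y * Z * Y⁻¹ = Y * Lmat M * X - γ • 1 := by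
      apply cancel hXu hYu
      calc X * (Y * Z * Y⁻¹) * Y = X * Y * Z * (Y⁻¹ * Y) := by noncomm_ring
        _ = Tmat M := by rw [Matrix.nonsing_inv_mul Y hYu, mul_one, hT]
        _ = X * Y * Lmat M * (X * Y) - γ • (X * Y) := key.symm
        _ = X * (Y * Lmat M * X - γ • 1) * Y := by
            rw [mul_sub, sub_mul, Matrix.mul_smul, mul_one, Matrix.smul_mul]
            noncomm_ring
    rw [inner, psi_sub_smul, psi_mul]
  · have key := key2 M α (Y * Z) X hX htrX (by rw [← Matrix.mul_assoc]; exact hT)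
    have inner : Y⁻¹ * X * Y = Z * Lmat M * Y - α • 1 := by
      apply cancel hYu hZu
      calc Y * (Y⁻¹ * X * Y) * Z = (Y * Y⁻¹) * (X * Y * Z) := by noncomm_ring
        _ = Tmat M := by rw [Matrix.mul_nonsing_inv Y hYu, one_mul, hT]
        _ = Y * Z * Lmat M * (Y * Z) - α • (Y * Z) := key.symm
        _ = Y * (Z * Lmat M * Y - α • 1) * Z := by
            rw [mul_sub, sub_mul, Matrix.mul_smul, mul_one, Matrix.smul_mul]
            noncomm_ring
    rw [inner, psi_sub_smul, psi_mul]
end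

section
/- Let R be a commutative ring and let 𝓜, α, γ ∈ R. Let X, Y, Z be 2×2 matrices over R with det(X) = det(Y) = det(Z) = 1, X·Y·Z = T, tr(X) = −α, and tr(Z) = −γ. Then −(X·(Z⁻¹·Y·Z))⁻¹ = (Y·Z)⁻¹·(X·Z)⁻¹ − S(γ) and −((X·Y·X⁻¹)·Z)⁻¹ = (X·Z)⁻¹·(X·Y)⁻¹ − S(α). -/
open Matrix

lemma aux_inv {R : Type*} [CommRing R] (A : Matrix (Fin 2) (Fin 2) R) (h : A.det = 1) :
    A⁻¹ = A.trace • (1 : Matrix (Fin 2) (Fin 2) R) - A := by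
  rw [Matrix.inv_def, h, Ring.inverse_one, one_smul, Matrix.adjugate_fin_two]
  ext i j
  fin_cases i <;> fin_cases j <;> simp [Matrix.trace_fin_two]

/-- If `(X,Y,Z)` is a Markov-monodromy decomposition of the cluster generalized Cohn
triple `(−(YZ)⁻¹, −(XZ)⁻¹, −(XY)⁻¹)`, then `(X, Z, Z⁻¹YZ)` and `(XYX⁻¹, X, Z)` are
Markov-monodromy decompositions of the two children triples. -/
theorem mm_decomposition_propagation {R : Type*} [CommRing R] (M α γ : R)
    (X Y Z : Matrix (Fin 2) (Fin 2) R)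
    (hX : X.det = 1) (hY : Y.det = 1) (hZ : Z.det = 1)
    (hT : X * Y * Z = Tmat M)
    (htrX : X.trace = -α) (htrZ : Z.trace = -γ) :
    -(X * (Z⁻¹ * Y * Z))⁻¹ = (Y * Z)⁻¹ * (X * Z)⁻¹ - Smat M γ ∧
    -((X * Y * X⁻¹) * Z)⁻¹ = (X * Z)⁻¹ * (X * Y)⁻¹ - Smat M α := by
  have hXu : IsUnit X.det := hX ▸ isUnit_one
  have hZu : IsUnit Z.det := hZ ▸ isUnit_one
  have hZinv2 : (Z⁻¹)⁻¹ = Z := Matrix.nonsing_inv_nonsing_inv Z hZu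
  have hXinv2 : (X⁻¹)⁻¹ = X := Matrix.nonsing_inv_nonsing_inv X hXu
  have hTinv : Z⁻¹ * Y⁻¹ * X⁻¹ = (Tmat M)⁻¹ := by
    rw [← hT, Matrix.mul_inv_rev, Matrix.mul_inv_rev, mul_assoc]
  have hdT : (Tmat M).det = 1 := by simp [Tmat, Matrix.det_fin_two_of]
  have hTval : (Tmat M)⁻¹ = !![-1, 0; -M, -1] := by
    rw [Matrix.inv_def, hdT, Ring.inverse_one, one_smul, Tmat, Matrix.adjugate_fin_two]
    simp
  have hZkey : Z⁻¹ + Z = (-γ) • (1 : Matrix (Fin 2) (Fin 2) R) := by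
    rw [aux_inv Z hZ, htrZ, sub_add_cancel]
  have hXkey : X⁻¹ + X = (-α) • (1 : Matrix (Fin 2) (Fin 2) R) := by
    rw [aux_inv X hX, htrX, sub_add_cancel]
  have hSγ : Z⁻¹ * Y⁻¹ * (Z⁻¹ + Z) * X⁻¹ = Smat M γ := by
    rw [hZkey, Matrix.mul_smul, smul_mul_assoc, mul_one, hTinv, hTval]
    ext i j
    fin_cases i <;> fin_cases j <;> simp [Smat] <;> ring
  have hSα : Z⁻¹ * (X⁻¹ + X) * (Y⁻¹ * X⁻¹) = Smat M α := by
    rw [hXkey, Matrix.mul_smul, smul_mul_assoc, mul_one, ← mul_assoc, hTinv, hTval]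
    ext i j
    fin_cases i <;> fin_cases j <;> simp [Smat] <;> ring
  constructor
  · simp only [Matrix.mul_inv_rev, hZinv2]
    rw [← hSγ]
    noncomm_ring
  · simp only [Matrix.mul_inv_rev, hXinv2]
    rw [← hSα]
    noncomm_ring
end

section
/- Let F be the field of rational functions ℚ(x₁,x₂,x₃), let k₁, k₂, k₃ be natural numbers regarded in F, let f ∈ F, and set 𝓜 := (x₁² + x₂² + x₃² + k₁x₂x₃ + k₂x₁x₃ + k₃x₁x₂)/(x₁x₂x₃). Define 2×2 matrices over F: P with first row (f, x₁), P₂₂ := (−f·x₂x₃ + k₂x₁x₃ + k₃x₁x₂ + x₁² + x₂² + x₃²)/(x₂x₃) and P₂₁ := (f·P₂₂ − 1)/x₁; Q with Q₁₁ := (f·x₂ + k₁x₂ + x₃)/x₁, Q₁₂ := x₂, Q₂₂ := (−f·x₂x₃ + k₃x₁x₂ + x₁² + x₂²)/(x₁x₃) and Q₂₁ := (Q₁₁·Q₂₂ − 1)/x₂; R with R₁₁ := (f·x₂x₃ + k₁x₂x₃ + k₂x₁x₃ + x₁² + x₃²)/(x₁x₂), R₁₂ := x₃, R₂₂ := (−f·x₂x₃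 + x₂²)/(x₁x₂) and R₂₁ := (R₁₁·R₂₂ − 1)/x₃. Then det(P) = det(Q) = det(R) = 1, tr(P) = 𝓜·x₁ − k₁, tr(Q) = 𝓜·x₂ − k₂, tr(R) = 𝓜·x₃ − k₃, and Q = P·R − S(k₂), where S(k₂) is the matrix with rows (k₂, 0) and (k₂·𝓜, k₂). -/
open Matrix

noncomputable section

/-- The field of rational functions `ℚ(x₁,x₂,x₃)`. -/
abbrev RatFunc3 : Type := FractionRing (MvPolynomial (Fin 3) ℚ)

/-- The variable `x₁`. -/
def x₁ : RatFunc3 := algebraMap (MvPolynomial (Fin 3) ℚ) RatFunc3 (MvPolynomial.X 0)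

/-- The variable `x₂`. -/
def x₂ : RatFunc3 := algebraMap (MvPolynomial (Fin 3) ℚ) RatFunc3 (MvPolynomial.X 1)

/-- The variable `x₃`. -/
def x₃ : RatFunc3 := algebraMap (MvPolynomial (Fin 3) ℚ) RatFunc3 (MvPolynomial.X 2)

/-- The `(k₁,k₂,k₃)`-generalized Markov invariant `𝓜`. -/
def MInv (k₁ k₂ k₃ : ℕ) : RatFunc3 :=
  (x₁ ^ 2 + x₂ ^ 2 + x₃ ^ 2 + k₁ * x₂ * x₃ + k₂ * x₁ * x₃ + k₃ * x₁ * x₂) /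
    (x₁ * x₂ * x₃)

/-- The matrix `P_id(f)`. -/
def Pid (k₂ k₃ : ℕ) (f : RatFunc3) : Matrix (Fin 2) (Fin 2) RatFunc3 :=
  let P₂₂ : RatFunc3 :=
    (-f * x₂ * x₃ + k₂ * x₁ * x₃ + k₃ * x₁ * x₂ + x₁ ^ 2 + x₂ ^ 2 + x₃ ^ 2) /
      (x₂ * x₃)
  !![f, x₁; (f * P₂₂ - 1) / x₁, P₂₂]

/-- The matrix `Q_id(f)`. -/
def Qid (k₁ k₃ : ℕ) (f : RatFunc3) : Matrix (Fin 2) (Fin 2) RatFunc3 :=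
  let Q₁₁ : RatFunc3 := (f * x₂ + k₁ * x₂ + x₃) / x₁
  let Q₂₂ : RatFunc3 := (-f * x₂ * x₃ + k₃ * x₁ * x₂ + x₁ ^ 2 + x₂ ^ 2) / (x₁ * x₃)
  !![Q₁₁, x₂; (Q₁₁ * Q₂₂ - 1) / x₂, Q₂₂]

/-- The matrix `R_id(f)`. -/
def Rid (k₁ k₂ : ℕ) (f : RatFunc3) : Matrix (Fin 2) (Fin 2) RatFunc3 :=
  let R₁₁ : RatFunc3 :=
    (f * x₂ * x₃ + k₁ * x₂ * x₃ + k₂ * x₁ * x₃ + x₁ ^ 2 + x₃ ^ 2) / (x₁ * x₂)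
  let R₂₂ : RatFunc3 := (-f * x₂ * x₃ + x₂ ^ 2) / (x₁ * x₂)
  !![R₁₁, x₃; (R₁₁ * R₂₂ - 1) / x₃, R₂₂]

/-- The matrix `S(k₂) = [[k₂, 0], [k₂·𝓜, k₂]]`. -/
def Sk₂ (k₁ k₂ k₃ : ℕ) : Matrix (Fin 2) (Fin 2) RatFunc3 :=
  !![(k₂ : RatFunc3), 0; k₂ * MInv k₁ k₂ k₃, k₂]


lemma hx (i : Fin 3) :
    algebraMap (MvPolynomial (Fin 3) ℚ) RatFunc3 (MvPolynomial.X i) ≠ 0 := by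
  simpa using (map_ne_zero_iff _ (IsFractionRing.injective (MvPolynomial (Fin 3) ℚ) RatFunc3)).mpr
    (MvPolynomial.X_ne_zero i)

lemma hx₁ : x₁ ≠ 0 := hx 0
lemma hx₂ : x₂ ≠ 0 := hx 1
lemma hx₃ : x₃ ≠ 0 := hx 2

set_option maxHeartbeats 2000000 in
/-- The explicit matrices `(P_id(f), Q_id(f), R_id(f))` form a
`(k₁,k₂,k₃)`-cluster generalized Cohn triple associated with the initial cluster
`(x₁, x₂, x₃)`. -/
theorem initial_cohn_triple (k₁ k₂ k₃ : ℕ) (f : RatFunc3) :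
    (Pid k₂ k₃ f).det = 1 ∧ (Qid k₁ k₃ f).det = 1 ∧ (Rid k₁ k₂ f).det = 1 ∧
    (Pid k₂ k₃ f).trace = MInv k₁ k₂ k₃ * x₁ - k₁ ∧
    (Qid k₁ k₃ f).trace = MInv k₁ k₂ k₃ * x₂ - k₂ ∧
    (Rid k₁ k₂ f).trace = MInv k₁ k₂ k₃ * x₃ - k₃ ∧
    Qid k₁ k₃ f = Pid k₂ k₃ f * Rid k₁ k₂ f - Sk₂ k₁ k₂ k₃ := by
  have h1 := hx₁; have h2 := hx₂; have h3 := hx₃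
  refine ⟨?_, ?_, ?_, ?_, ?_, ?_, ?_⟩
  · simp only [Pid, det_fin_two_of]
    field_simp
    ring
  · simp only [Qid, det_fin_two_of]
    field_simp
    ring_nf
  · simp only [Rid, det_fin_two_of]
    field_simp
    ring_nf
  · simp only [Pid, MInv, Matrix.trace_fin_two_of]
    field_simp
    ring
  · simp only [Qid, MInv, Matrix.trace_fin_two_of]
    field_simp
    ring
  · simp only [Rid, MInv, Matrix.trace_fin_two_of]
    field_simp
    ring
  · ext i j
    fin_cases i <;> fin_cases j <;>
      simp only [Pid, Qid, Rid, Sk₂, MInv, Matrix.mul_apply, Fin.sum_univ_two,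
        Matrix.sub_apply, Matrix.cons_val', Matrix.cons_val_zero, Matrix.cons_val_one,
        Matrix.head_cons, Matrix.head_fin_const, Matrix.of_apply, Matrix.cons_val_fin_one,
        Matrix.empty_val', Fin.zero_eta, Fin.mk_one]
    · field_simp
      ring
    · field_simp
      ring
    · field_simp
      ring
    · field_simp
      ring

end
end

section
/- Let P₁ and P₂ be weighted fence posets with chronological orderings on h₁ and h₂ elements, with weight functions wt₁ and wt₂ taking values in a commutative ring R. Let P₃₄ be the weighted fence poset on {1, …, h₁+h₂} whose order is generated by the generating relations of P₁ on {1,…,h₁}, the generating relations of P₂ shifted to {h₁+1,…,h₁+h₂}, and the additional relation h₁ < h₁+1, with weights inherited from P₁ and P₂. Let u be the largest index with 1 ≤ u < h₁ such that u is not greater than h₁ in the order of P₁, taking u = 0 if no such index exists; let v be the smallest index with 1 < v ≤ h₂ such that v is not less than 1 in the order of P₂, taking v = h₂+1 if no such index exists. Set Z := ∏_{i=1}^{v−1} wt₂(i). Then W(P₁)·W(P₂) = W(P₃₄) + Z·W(P₁[1,u])·W(P₂[v,h₂]). -/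
open Finset

/-- The generating relation of a fence poset with chronological ordering on indices
`lo, …, hi`: for each `lo ≤ i < hi`, `up i = true` encodes the generating relation
`i < i+1` and `up i = false` encodes the generating relation `i > i+1`. -/
def fenceGen (lo hi : ℕ) (up : ℕ → Bool) (x y : ℕ) : Prop :=
  ∃ i, lo ≤ i ∧ i + 1 ≤ hi ∧
    ((up i = true ∧ x = i ∧ y = i + 1) ∨ (up i = false ∧ x = i + 1 ∧ y = i))

/-- The partial order generated by a generating relation `G` (its
reflexive–transitive closure). -/
def genLE (G : ℕ → ℕ → Prop) : ℕ → ℕ → Prop :=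
  Relation.ReflTransGen G

/-- `I` is a lower set (order ideal) for the order generated by `G`. -/
def IsIdeal (G : ℕ → ℕ → Prop) (I : Finset ℕ) : Prop :=
  ∀ x y, y ∈ I → genLE G x y → x ∈ I

open Classical in
/-- The weight generating function of order ideals: the sum, over all lower sets `I`
of the poset on ground set `S` with order generated by `G`, of `∏ x ∈ I, wt x`. -/
noncomputable def W {R : Type*} [CommRing R] (S : Finset ℕ) (G : ℕ → ℕ → Prop)
    (wt : ℕ → R) : R :=
  ∑ I ∈ S.powerset, if IsIdeal G I then ∏ x ∈ I, wt x else 0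

/-- The `up`-data of the grafting `P₁ ↗ P₂` of two fence posets on `h₁` and `h₂`
elements: the relations of `P₁` on `{1,…,h₁}`, those of `P₂` shifted to
`{h₁+1,…,h₁+h₂}`, and the additional relation `h₁ < h₁+1`. -/
def graftUp (h₁ : ℕ) (up₁ up₂ : ℕ → Bool) (i : ℕ) : Bool :=
  if i < h₁ then up₁ i else if i = h₁ then true else up₂ (i - h₁)

/-- The weights of the grafting `P₁ ↗ P₂`, inherited from `P₁` and `P₂`. -/
def graftWt {R : Type*} (h₁ : ℕ) (wt₁ wt₂ : ℕ → R) (i : ℕ) : R :=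
  if i ≤ h₁ then wt₁ i else wt₂ (i - h₁)

lemma isIdeal_iff (G : ℕ → ℕ → Prop) (I : Finset ℕ) :
    IsIdeal G I ↔ ∀ x y, y ∈ I → G x y → x ∈ I := by
  constructor
  · intro h x y hy hxy
    exact h x y hy (Relation.ReflTransGen.single hxy)
  · intro h x y hy hxy
    induction hxy using Relation.ReflTransGen.head_induction_on with
    | refl => exact hy
    | head hab _ ih => exact h _ _ ih hab

lemma step_char {lo hi : ℕ} {up : ℕ → Bool} {b c : ℕ}
    (h : fenceGen lo hi up b c) :
    (b < c ∧ ∀ j, b ≤ j → j < c → up j = true) ∨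
      (c < b ∧ ∀ j, c ≤ j → j < b → up j = false) := by
  obtain ⟨i, _, _, ⟨hup, hb, hc⟩ | ⟨hup, hb, hc⟩⟩ := h
  · subst hb; subst hc
    exact Or.inl ⟨Nat.lt_succ_self _, fun j h1 h2 => by
      have : j = b := by omega
      subst this; exact hup⟩
  · subst hc; subst hb
    exact Or.inr ⟨Nat.lt_succ_self _, fun j h1 h2 => by
      have : j = c := by omega
      subst this; exact hup⟩

lemma fence_char {lo hi : ℕ} {up : ℕ → Bool} {x y : ℕ}
    (h : genLE (fenceGen lo hi up) x y) :
    x = y ∨ (x < y ∧ ∀ j, x ≤ j → j < y → up j = true) ∨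
      (y < x ∧ ∀ j, y ≤ j → j < x → up j = false) := by
  induction h with
  | refl => exact Or.inl rfl
  | @tail b c _ hbc ih =>
    rcases step_char hbc with ⟨hbc1, hbc2⟩ | ⟨hbc1, hbc2⟩
    · rcases ih with rfl | ⟨hlt, hups⟩ | ⟨hlt, hdowns⟩
      · exact Or.inr (Or.inl ⟨hbc1, hbc2⟩)
      · refine Or.inr (Or.inl ⟨by omega, fun j h1 h2 => ?_⟩)
        rcases Nat.lt_or_ge j b with h' | h'
        · exact hups j h1 h'
        · exact hbc2 j h' h2
      · exact absurd (hbc2 b le_rfl hbc1) (by simp [hdowns b le_rfl hlt])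
    · rcases ih with rfl | ⟨hlt, hups⟩ | ⟨hlt, hdowns⟩
      · exact Or.inr (Or.inr ⟨hbc1, hbc2⟩)
      · exact absurd (hups (b-1) (by omega) (by omega))
          (by simp [hbc2 (b-1) (by omega) (by omega)])
      · refine Or.inr (Or.inr ⟨by omega, fun j h1 h2 => ?_⟩)
        rcases Nat.lt_or_ge j b with h'' | h''
        · exact hbc2 j h1 h''
        · exact hdowns j h'' h2

lemma isIdeal_fence_iff (lo hi : ℕ) (up : ℕ → Bool) (I : Finset ℕ) :
    IsIdeal (fenceGen lo hi up) I ↔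
      ∀ i, lo ≤ i → i + 1 ≤ hi →
        ((up i = true → i + 1 ∈ I → i ∈ I) ∧ (up i = false → i ∈ I → i + 1 ∈ I)) := by
  rw [isIdeal_iff]
  constructor
  · intro h i h1 h2
    exact ⟨fun hup hm => h i (i+1) hm ⟨i, h1, h2, Or.inl ⟨hup, rfl, rfl⟩⟩,
           fun hup hm => h (i+1) i hm ⟨i, h1, h2, Or.inr ⟨hup, rfl, rfl⟩⟩⟩
  · rintro h x y hy ⟨i, h1, h2, ⟨hup, rfl, rfl⟩ | ⟨hup, rfl, rfl⟩⟩
    · exact (h x h1 h2).1 hup hy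
    · exact (h y h1 h2).2 hup hy

lemma no_high {h₁ u : ℕ} {up₁ : ℕ → Bool} {I : Finset ℕ}
    (hI : IsIdeal (fenceGen 1 h₁ up₁) I) (hIs : I ⊆ Icc 1 h₁)
    (hf : ∀ j, u < j → j < h₁ → up₁ j = false) (hnot : h₁ ∉ I) :
    I ⊆ Icc 1 u := by
  intro j hj
  have hj' := hIs hj
  rw [mem_Icc] at hj' ⊢
  refine ⟨hj'.1, ?_⟩
  by_contra hgt
  push_neg at hgt
  have key : ∀ k, j ≤ k → k ≤ h₁ → k ∈ I := by
    intro k hk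
    induction k, hk using Nat.le_induction with
    | base => intro _; exact hj
    | succ k hk ih =>
      intro hk1
      have hklt : k < h₁ := by omega
      exact ((isIdeal_fence_iff 1 h₁ up₁ I).1 hI k (by omega) (by omega)).2
        (hf k (by omega) hklt) (ih (by omega))
  exact hnot (key h₁ hj'.2 le_rfl)

lemma low_full {h₂ v : ℕ} {up₂ : ℕ → Bool} {I : Finset ℕ}
    (hI : IsIdeal (fenceGen 1 h₂ up₂) I)
    (hf : ∀ j, 1 ≤ j → j < v - 1 → up₂ j = false) (hvh : v - 1 ≤ h₂)
    (h1 : 1 ∈ I) : Icc 1 (v - 1) ⊆ I := by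
  intro k hk
  rw [mem_Icc] at hk
  have key : ∀ k, 1 ≤ k → k ≤ v - 1 → k ∈ I := by
    intro k hk
    induction k, hk using Nat.le_induction with
    | base => intro _; exact h1
    | succ k hk ih =>
      intro hk1
      exact ((isIdeal_fence_iff 1 h₂ up₂ I).1 hI k (by omega) (by omega)).2
        (hf k (by omega) (by omega)) (ih (by omega))
  exact key k hk.1 hk.2

lemma ideal_restrict_low {h₁ u : ℕ} {up₁ : ℕ → Bool}
    (hu1 : ∀ j, u < j → j < h₁ → up₁ j = false)
    (hu2 : 1 ≤ u → up₁ u = true) (huh : u ≤ h₁) {I : Finset ℕ}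
    (hsub : I ⊆ Icc 1 u) :
    IsIdeal (fenceGen 1 h₁ up₁) I ↔ IsIdeal (fenceGen 1 u up₁) I := by
  rw [isIdeal_fence_iff, isIdeal_fence_iff]
  constructor
  · intro h i h1 h2
    exact h i h1 (by omega)
  · intro h i h1 h2
    rcases Nat.lt_trichotomy i u with h' | h' | h'
    · exact h i h1 (by omega)
    · subst h'
      refine ⟨fun _ hm => absurd (mem_Icc.1 (hsub hm)).2 (by omega),
              fun hup _ => absurd (hu2 h1) (by simp [hup])⟩
    · refine ⟨fun hup _ => absurd (hu1 i h' (by omega)) (by simp [hup]),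
              fun _ hm => absurd (mem_Icc.1 (hsub hm)).2 (by omega)⟩

lemma ideal_restrict_high {h₂ v : ℕ} {up₂ : ℕ → Bool}
    (hv1 : ∀ j, 1 ≤ j → j < v - 1 → up₂ j = false)
    (hv2 : v ≤ h₂ → up₂ (v - 1) = true) (hv3 : 2 ≤ v) {J : Finset ℕ}
    (hsub : J ⊆ Icc v h₂) :
    IsIdeal (fenceGen 1 h₂ up₂) (Icc 1 (v - 1) ∪ J) ↔
      IsIdeal (fenceGen v h₂ up₂) J := by
  have hmem : ∀ x, v ≤ x → (x ∈ Icc 1 (v - 1) ∪ J ↔ x ∈ J) := by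
    intro x hx
    simp only [mem_union, mem_Icc]
    constructor
    · rintro (h' | h')
      · omega
      · exact h'
    · exact Or.inr
  rw [isIdeal_fence_iff, isIdeal_fence_iff]
  constructor
  · intro h i h1 h2
    have := h i (by omega) h2
    rw [hmem i h1, hmem (i+1) (by omega)] at this
    exact this
  · intro h i h1 h2
    rcases Nat.lt_trichotomy i (v - 1) with h' | h' | h'
    · refine ⟨fun hup _ => absurd (hv1 i h1 h') (by simp [hup]),
              fun _ _ => by simp only [mem_union, mem_Icc]; omega⟩
    · subst h'
      refine ⟨fun _ _ => by simp only [mem_union, mem_Icc]; omega,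
              fun hup _ => absurd (hv2 (by omega)) (by simp [hup])⟩
    · have := h i (by omega) h2
      rw [hmem i (by omega), hmem (i+1) (by omega)]
      exact this

lemma U_facts {h₁ u : ℕ} {up₁ : ℕ → Bool} (hh₁ : 1 ≤ h₁)
    (hu : (1 ≤ u ∧ u < h₁ ∧ ¬ genLE (fenceGen 1 h₁ up₁) h₁ u ∧
            ∀ i, u < i → i < h₁ → genLE (fenceGen 1 h₁ up₁) h₁ i) ∨
          (u = 0 ∧ ∀ i, 1 ≤ i → i < h₁ → genLE (fenceGen 1 h₁ up₁) h₁ i)) :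
    u < h₁ ∧ (∀ j, u < j → j < h₁ → up₁ j = false) ∧ (1 ≤ u → up₁ u = true) := by
  have char : ∀ j, (genLE (fenceGen 1 h₁ up₁) h₁ j) → j < h₁ → up₁ j = false := by
    intro j hg hj
    rcases fence_char hg with h' | ⟨h', _⟩ | ⟨_, hd⟩
    · omega
    · omega
    · exact hd j le_rfl hj
  rcases hu with ⟨h1u, hult, hnot, hall⟩ | ⟨rfl, hall⟩
  · refine ⟨hult, fun j hj1 hj2 => char j (hall j hj1 hj2) hj2, fun _ => ?_⟩
    rcases Bool.eq_false_or_eq_true (up₁ u) with ht | hf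
    · exact ht
    exfalso
    apply hnot
    have step : fenceGen 1 h₁ up₁ (u+1) u :=
      ⟨u, h1u, by omega, Or.inr ⟨hf, rfl, rfl⟩⟩
    rcases Nat.lt_or_ge (u+1) h₁ with h' | h'
    · exact Relation.ReflTransGen.tail (hall (u+1) (by omega) h') step
    · have h2 : u + 1 = h₁ := by omega
      exact Relation.ReflTransGen.single (h2 ▸ step)
  · exact ⟨by omega, fun j hj1 hj2 => char j (hall j (by omega) hj2) hj2, by omega⟩

lemma V_facts {h₂ v : ℕ} {up₂ : ℕ → Bool} (hh₂ : 1 ≤ h₂)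
    (hv : (1 < v ∧ v ≤ h₂ ∧ ¬ genLE (fenceGen 1 h₂ up₂) v 1 ∧
            ∀ i, 1 < i → i < v → genLE (fenceGen 1 h₂ up₂) i 1) ∨
          (v = h₂ + 1 ∧ ∀ i, 1 < i → i ≤ h₂ → genLE (fenceGen 1 h₂ up₂) i 1)) :
    2 ≤ v ∧ v ≤ h₂ + 1 ∧ (∀ j, 1 ≤ j → j < v - 1 → up₂ j = false) ∧
      (v ≤ h₂ → up₂ (v - 1) = true) := by
  have char : ∀ j, (genLE (fenceGen 1 h₂ up₂) (j+1) 1) → 1 ≤ j → up₂ j = false := by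
    intro j hg hj
    rcases fence_char hg with h' | ⟨h', _⟩ | ⟨_, hd⟩
    · omega
    · omega
    · exact hd j hj (by omega)
  rcases hv with ⟨h1v, hvle, hnot, hall⟩ | ⟨rfl, hall⟩
  · refine ⟨by omega, by omega,
      fun j hj1 hj2 => char j (hall (j+1) (by omega) (by omega)) hj1, fun _ => ?_⟩
    rcases Bool.eq_false_or_eq_true (up₂ (v-1)) with ht | hf
    · exact ht
    exfalso
    apply hnot
    have step : fenceGen 1 h₂ up₂ v (v-1) :=
      ⟨v-1, by omega, by omega, Or.inr ⟨hf, by omega, rfl⟩⟩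
    rcases Nat.lt_or_ge 1 (v-1) with h' | h'
    · exact Relation.ReflTransGen.head step (hall (v-1) h' (by omega))
    · have hv1 : v - 1 = 1 := by omega
      rw [hv1] at step
      exact Relation.ReflTransGen.single step
  · exact ⟨by omega, by omega,
      fun j hj1 hj2 => char j (hall (j+1) (by omega) (by omega)) hj1, by omega⟩

lemma graft_ideal_iff {h₁ h₂ : ℕ} {up₁ up₂ : ℕ → Bool} (hh₁ : 1 ≤ h₁) (hh₂ : 1 ≤ h₂)
    {I₁ I₂ : Finset ℕ} (h1 : I₁ ⊆ Icc 1 h₁) (h2 : I₂ ⊆ Icc 1 h₂) :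
    IsIdeal (fenceGen 1 (h₁ + h₂) (graftUp h₁ up₁ up₂)) (I₁ ∪ I₂.image (· + h₁)) ↔
      (IsIdeal (fenceGen 1 h₁ up₁) I₁ ∧ IsIdeal (fenceGen 1 h₂ up₂) I₂ ∧
        (1 ∈ I₂ → h₁ ∈ I₁)) := by
  have mlow : ∀ x, x ≤ h₁ → (x ∈ I₁ ∪ I₂.image (· + h₁) ↔ x ∈ I₁) := by
    intro x hx
    simp only [Finset.mem_union, Finset.mem_image]
    constructor
    · rintro (h | ⟨y, hy, rfl⟩)
      · exact h
      · have := Finset.mem_Icc.1 (h2 hy); omega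
    · exact Or.inl
  have mhigh : ∀ y, 1 ≤ y → (y + h₁ ∈ I₁ ∪ I₂.image (· + h₁) ↔ y ∈ I₂) := by
    intro y hy
    simp only [Finset.mem_union, Finset.mem_image]
    constructor
    · rintro (h | ⟨z, hz, hzz⟩)
      · have := Finset.mem_Icc.1 (h1 h); omega
      · have : z = y := by omega
        subst this; exact hz
    · intro h; exact Or.inr ⟨y, h, rfl⟩
  have hgumid : graftUp h₁ up₁ up₂ h₁ = true := by
    unfold graftUp; rw [if_neg (by omega), if_pos rfl]
  rw [isIdeal_fence_iff, isIdeal_fence_iff, isIdeal_fence_iff]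
  constructor
  · intro h
    refine ⟨fun i hi1 hi2 => ?_, fun i hi1 hi2 => ?_, fun hmem => ?_⟩
    · have := h i hi1 (by omega)
      rw [mlow i (by omega), mlow (i+1) (by omega),
        show graftUp h₁ up₁ up₂ i = up₁ i from if_pos (by omega)] at this
      exact this
    · have := h (i + h₁) (by omega) (by omega)
      have hgu : graftUp h₁ up₁ up₂ (i + h₁) = up₂ i := by
        unfold graftUp
        rw [if_neg (by omega), if_neg (by omega)]
        congr 1; omega
      rw [hgu, show i + h₁ + 1 = (i+1) + h₁ by omega,
        mhigh i hi1, mhigh (i+1) (by omega)] at this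
      exact this
    · have := (h h₁ (by omega) (by omega)).1 hgumid
      rw [show h₁ + 1 = 1 + h₁ by omega, mhigh 1 le_rfl, mlow h₁ le_rfl] at this
      exact this hmem
  · rintro ⟨hI1, hI2, hcomp⟩ i hi1 hi2
    rcases Nat.lt_trichotomy i h₁ with h' | h' | h'
    · rw [mlow i (by omega), mlow (i+1) (by omega),
        show graftUp h₁ up₁ up₂ i = up₁ i from if_pos (by omega)]
      exact hI1 i hi1 h'
    · subst h'
      rw [hgumid]
      refine ⟨fun _ hm => ?_, fun hf => by simp at hf⟩
      rw [show i + 1 = 1 + i by omega, mhigh 1 le_rfl] at hm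
      rw [mlow i le_rfl]
      exact hcomp hm
    · obtain ⟨j, rfl⟩ : ∃ j, i = j + h₁ := ⟨i - h₁, by omega⟩
      have hgu : graftUp h₁ up₁ up₂ (j + h₁) = up₂ j := by
        unfold graftUp
        rw [if_neg (by omega), if_neg (by omega)]
        congr 1; omega
      rw [hgu, show j + h₁ + 1 = (j+1) + h₁ by omega,
        mhigh j (by omega), mhigh (j+1) (by omega)]
      exact hI2 j (by omega) (by omega)

lemma graft_prod {R : Type*} [CommRing R] {h₁ h₂ : ℕ} {wt₁ wt₂ : ℕ → R}
    {I₁ I₂ : Finset ℕ} (h1 : I₁ ⊆ Icc 1 h₁) (h2 : I₂ ⊆ Icc 1 h₂) :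
    ∏ x ∈ I₁ ∪ I₂.image (· + h₁), graftWt h₁ wt₁ wt₂ x =
      (∏ x ∈ I₁, wt₁ x) * ∏ x ∈ I₂, wt₂ x := by
  rw [Finset.prod_union]
  · congr 1
    · exact Finset.prod_congr rfl fun x hx => if_pos (Finset.mem_Icc.1 (h1 hx)).2
    · rw [Finset.prod_image (fun x _ y _ h => by omega)]
      refine Finset.prod_congr rfl fun x hx => ?_
      have hx1 := (Finset.mem_Icc.1 (h2 hx)).1
      unfold graftWt
      rw [if_neg (by omega)]
      congr 1; omega
  · rw [Finset.disjoint_left]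
    rintro a ha hb
    obtain ⟨y, hy, rfl⟩ := Finset.mem_image.1 hb
    have := Finset.mem_Icc.1 (h1 ha)
    have := Finset.mem_Icc.1 (h2 hy)
    omega

open Classical in
lemma W_eq {R : Type*} [CommRing R] (S : Finset ℕ) (G : ℕ → ℕ → Prop) (wt : ℕ → R) :
    W S G wt = ∑ I ∈ S.powerset.filter fun I => IsIdeal G I, ∏ x ∈ I, wt x :=
  (Finset.sum_filter _ _).symm

lemma low_of_union {h₁ h₂ : ℕ} {I₁ I₂ : Finset ℕ} (h1 : I₁ ⊆ Finset.Icc 1 h₁)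
    (h2 : I₂ ⊆ Finset.Icc 1 h₂) :
    (I₁ ∪ I₂.image (· + h₁)).filter (· ≤ h₁) = I₁ := by
  ext x
  simp only [Finset.mem_filter, Finset.mem_union, Finset.mem_image]
  constructor
  · rintro ⟨h | ⟨y, hy, rfl⟩, hx⟩
    · exact h
    · have := Finset.mem_Icc.1 (h2 hy); omega
  · intro h
    exact ⟨Or.inl h, (Finset.mem_Icc.1 (h1 h)).2⟩

lemma high_of_union {h₁ h₂ : ℕ} {I₁ I₂ : Finset ℕ} (h1 : I₁ ⊆ Finset.Icc 1 h₁)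
    (h2 : I₂ ⊆ Finset.Icc 1 h₂) :
    ((I₁ ∪ I₂.image (· + h₁)).filter (fun x => h₁ < x)).image (· - h₁) = I₂ := by
  ext x
  simp only [Finset.mem_image, Finset.mem_filter, Finset.mem_union]
  constructor
  · rintro ⟨a, ⟨ha | ⟨y, hy, rfl⟩, hgt⟩, rfl⟩
    · have := Finset.mem_Icc.1 (h1 ha); omega
    · simpa using hy
  · intro h
    have := Finset.mem_Icc.1 (h2 h)
    exact ⟨x + h₁, ⟨Or.inr ⟨x, h, rfl⟩, by omega⟩, by omega⟩

lemma union_of_parts {h₁ h₂ : ℕ} {J : Finset ℕ} (hJ : J ⊆ Finset.Icc 1 (h₁ + h₂)) :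
    J.filter (· ≤ h₁) ∪ ((J.filter (fun x => h₁ < x)).image (· - h₁)).image (· + h₁) = J := by
  ext x
  simp only [Finset.mem_union, Finset.mem_filter, Finset.mem_image]
  constructor
  · rintro (⟨h, _⟩ | ⟨y, ⟨a, ⟨ha, hgt⟩, rfl⟩, rfl⟩)
    · exact h
    · have : a - h₁ + h₁ = a := by omega
      rwa [this]
  · intro h
    rcases le_or_gt x h₁ with h' | h'
    · exact Or.inl ⟨h, h'⟩
    · exact Or.inr ⟨x - h₁, ⟨x, ⟨h, h'⟩, rfl⟩, by omega⟩

lemma low_subset {h₁ h₂ : ℕ} {J : Finset ℕ} (hJ : J ⊆ Finset.Icc 1 (h₁ + h₂)) :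
    J.filter (· ≤ h₁) ⊆ Finset.Icc 1 h₁ := by
  intro x hx
  rw [Finset.mem_filter] at hx
  have := Finset.mem_Icc.1 (hJ hx.1)
  rw [Finset.mem_Icc]
  omega

lemma high_subset {h₁ h₂ : ℕ} {J : Finset ℕ} (hJ : J ⊆ Finset.Icc 1 (h₁ + h₂)) :
    (J.filter (fun x => h₁ < x)).image (· - h₁) ⊆ Finset.Icc 1 h₂ := by
  intro x hx
  obtain ⟨a, ha, rfl⟩ := Finset.mem_image.1 hx
  rw [Finset.mem_filter] at ha
  have := Finset.mem_Icc.1 (hJ ha.1)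
  rw [Finset.mem_Icc]
  omega

/-- The skein relation for the grafting `P₃₄ = P₁ ↗ P₂` of two weighted fence posets:
`W(P₁)·W(P₂) = W(P₃₄) + Z·W(P₁[1,u])·W(P₂[v,h₂])`, where `u` is the largest index
`1 ≤ u < h₁` with `u ≯ h₁` in `P₁` (or `0` if none exists), `v` is the smallest
index `1 < v ≤ h₂` with `v ≮ 1` in `P₂` (or `h₂+1` if none exists), and
`Z = ∏_{i=1}^{v−1} wt₂ i`. -/
theorem fence_grafting_skein {R : Type*} [CommRing R]
    (h₁ h₂ : ℕ) (hh₁ : 1 ≤ h₁) (hh₂ : 1 ≤ h₂)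
    (up₁ up₂ : ℕ → Bool) (wt₁ wt₂ : ℕ → R) (u v : ℕ)
    (hu : (1 ≤ u ∧ u < h₁ ∧ ¬ genLE (fenceGen 1 h₁ up₁) h₁ u ∧
            ∀ i, u < i → i < h₁ → genLE (fenceGen 1 h₁ up₁) h₁ i) ∨
          (u = 0 ∧ ∀ i, 1 ≤ i → i < h₁ → genLE (fenceGen 1 h₁ up₁) h₁ i))
    (hv : (1 < v ∧ v ≤ h₂ ∧ ¬ genLE (fenceGen 1 h₂ up₂) v 1 ∧
            ∀ i, 1 < i → i < v → genLE (fenceGen 1 h₂ up₂) i 1) ∨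
          (v = h₂ + 1 ∧ ∀ i, 1 < i → i ≤ h₂ → genLE (fenceGen 1 h₂ up₂) i 1)) :
    W (Finset.Icc 1 h₁) (fenceGen 1 h₁ up₁) wt₁ *
        W (Finset.Icc 1 h₂) (fenceGen 1 h₂ up₂) wt₂ =
      W (Finset.Icc 1 (h₁ + h₂)) (fenceGen 1 (h₁ + h₂) (graftUp h₁ up₁ up₂))
          (graftWt h₁ wt₁ wt₂) +
        (∏ i ∈ Finset.Icc 1 (v - 1), wt₂ i) *
          (W (Finset.Icc 1 u) (fenceGen 1 u up₁) wt₁ *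
            W (Finset.Icc v h₂) (fenceGen v h₂ up₂) wt₂) := by
  classical
  obtain ⟨hult, hU1, hU2⟩ := U_facts hh₁ hu
  obtain ⟨h2v, hvle, hV1, hV2⟩ := V_facts hh₂ hv
  rw [W_eq, W_eq, W_eq, W_eq, W_eq]
  rw [Finset.sum_mul_sum, ← Finset.sum_product']
  rw [Finset.sum_mul_sum, ← Finset.sum_product', Finset.mul_sum]
  rw [← Finset.sum_filter_add_sum_filter_not
    (((Finset.Icc 1 h₁).powerset.filter fun I => IsIdeal (fenceGen 1 h₁ up₁) I) ×ˢ
     ((Finset.Icc 1 h₂).powerset.filter fun I => IsIdeal (fenceGen 1 h₂ up₂) I))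
    (fun p => 1 ∈ p.2 → h₁ ∈ p.1)]
  congr 1
  · -- grafted part
    refine Finset.sum_nbij' (fun p => p.1 ∪ p.2.image (· + h₁))
      (fun J => (J.filter (· ≤ h₁), (J.filter (fun x => h₁ < x)).image (· - h₁)))
      ?_ ?_ ?_ ?_ ?_
    · intro p hp
      simp only [Finset.mem_filter, Finset.mem_product, Finset.mem_powerset] at hp ⊢
      obtain ⟨⟨⟨hs1, hi1⟩, hs2, hi2⟩, hc⟩ := hp
      refine ⟨?_, (graft_ideal_iff hh₁ hh₂ hs1 hs2).2 ⟨hi1, hi2, hc⟩⟩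
      intro x hx
      rcases Finset.mem_union.1 hx with h | h
      · have := Finset.mem_Icc.1 (hs1 h)
        rw [Finset.mem_Icc]; omega
      · obtain ⟨y, hy, rfl⟩ := Finset.mem_image.1 h
        have := Finset.mem_Icc.1 (hs2 hy)
        rw [Finset.mem_Icc]; omega
    · intro J hJ
      simp only [Finset.mem_filter, Finset.mem_product, Finset.mem_powerset] at hJ ⊢
      obtain ⟨hJs, hJi⟩ := hJ
      have hJi' : IsIdeal (fenceGen 1 (h₁ + h₂) (graftUp h₁ up₁ up₂))
          (J.filter (· ≤ h₁) ∪ ((J.filter (fun x => h₁ < x)).image (· - h₁)).image (· + h₁)) := by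
        rwa [union_of_parts hJs]
      obtain ⟨hi1, hi2, hc⟩ :=
        (graft_ideal_iff hh₁ hh₂ (low_subset hJs) (high_subset hJs)).1 hJi'
      refine ⟨⟨⟨low_subset hJs, hi1⟩, high_subset hJs, hi2⟩, fun hm => ?_⟩
      have := hc hm
      rw [Finset.mem_filter] at this
      exact this
    · intro p hp
      simp only [Finset.mem_filter, Finset.mem_product, Finset.mem_powerset] at hp
      obtain ⟨⟨⟨hs1, _⟩, hs2, _⟩, _⟩ := hp
      exact Prod.ext (low_of_union hs1 hs2) (high_of_union hs1 hs2)
    · intro J hJ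
      simp only [Finset.mem_filter, Finset.mem_powerset] at hJ
      exact union_of_parts hJ.1
    · intro p hp
      simp only [Finset.mem_filter, Finset.mem_product, Finset.mem_powerset] at hp
      obtain ⟨⟨⟨hs1, _⟩, hs2, _⟩, _⟩ := hp
      exact (graft_prod hs1 hs2).symm
  · -- skein remainder part
    refine Finset.sum_nbij' (fun p => (p.1, p.2 \ Finset.Icc 1 (v - 1)))
      (fun q => (q.1, Finset.Icc 1 (v - 1) ∪ q.2)) ?_ ?_ ?_ ?_ ?_
    · intro p hp
      simp only [Finset.mem_filter, Finset.mem_product, Finset.mem_powerset] at hp ⊢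
      obtain ⟨⟨⟨hs1, hi1⟩, hs2, hi2⟩, hc⟩ := hp
      rw [Classical.not_imp] at hc
      obtain ⟨h1mem, hnot⟩ := hc
      have hsubu : p.1 ⊆ Finset.Icc 1 u := no_high hi1 hs1 hU1 hnot
      have hsub2 : Finset.Icc 1 (v - 1) ⊆ p.2 := low_full hi2 hV1 (by omega) h1mem
      have hsd : p.2 \ Finset.Icc 1 (v - 1) ⊆ Finset.Icc v h₂ := by
        intro x hx
        rw [Finset.mem_sdiff, Finset.mem_Icc] at hx
        have := Finset.mem_Icc.1 (hs2 hx.1)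
        rw [Finset.mem_Icc]; omega
      refine ⟨⟨hsubu, (ideal_restrict_low hU1 hU2 hult.le hsubu).1 hi1⟩, hsd, ?_⟩
      exact (ideal_restrict_high hV1 hV2 h2v hsd).1
        (by rwa [Finset.union_sdiff_of_subset hsub2])
    · intro q hq
      simp only [Finset.mem_filter, Finset.mem_product, Finset.mem_powerset] at hq ⊢
      obtain ⟨⟨hs1, hi1⟩, hs2, hi2⟩ := hq
      have hsub1 : q.1 ⊆ Finset.Icc 1 h₁ := by
        intro x hx
        have := Finset.mem_Icc.1 (hs1 hx)
        rw [Finset.mem_Icc]; omega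
      have hsub2 : Finset.Icc 1 (v - 1) ∪ q.2 ⊆ Finset.Icc 1 h₂ := by
        intro x hx
        rcases Finset.mem_union.1 hx with h | h
        · have := Finset.mem_Icc.1 h
          rw [Finset.mem_Icc]; omega
        · have := Finset.mem_Icc.1 (hs2 h)
          rw [Finset.mem_Icc]; omega
      refine ⟨⟨⟨hsub1, (ideal_restrict_low hU1 hU2 hult.le hs1).2 hi1⟩,
        hsub2, (ideal_restrict_high hV1 hV2 h2v hs2).2 hi2⟩, ?_⟩
      rw [Classical.not_imp]
      constructor
      · exact Finset.mem_union_left _ (Finset.mem_Icc.2 ⟨le_rfl, by omega⟩)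
      · intro hmem
        have := Finset.mem_Icc.1 (hs1 hmem)
        omega
    · intro p hp
      simp only [Finset.mem_filter, Finset.mem_product, Finset.mem_powerset] at hp
      obtain ⟨⟨⟨hs1, hi1⟩, hs2, hi2⟩, hc⟩ := hp
      rw [Classical.not_imp] at hc
      have hsub2 : Finset.Icc 1 (v - 1) ⊆ p.2 := low_full hi2 hV1 (by omega) hc.1
      dsimp only
      exact Prod.ext rfl (Finset.union_sdiff_of_subset hsub2)
    · intro q hq
      simp only [Finset.mem_filter, Finset.mem_product, Finset.mem_powerset] at hq
      obtain ⟨⟨hs1, hi1⟩, hs2, hi2⟩ := hq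
      have hdisj : Disjoint (Finset.Icc 1 (v - 1)) q.2 := by
        rw [Finset.disjoint_left]
        intro x hx hx'
        have := Finset.mem_Icc.1 hx
        have := Finset.mem_Icc.1 (hs2 hx')
        omega
      dsimp only
      exact Prod.ext rfl (Finset.union_sdiff_cancel_left hdisj)
    · intro p hp
      simp only [Finset.mem_filter, Finset.mem_product, Finset.mem_powerset] at hp
      obtain ⟨⟨⟨hs1, hi1⟩, hs2, hi2⟩, hc⟩ := hp
      rw [Classical.not_imp] at hc
      have hsub2 : Finset.Icc 1 (v - 1) ⊆ p.2 := low_full hi2 hV1 (by omega) hc.1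
      have := Finset.prod_sdiff (f := wt₂) hsub2
      dsimp only
      rw [← this]
      ring
end
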